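/- Let n ≥ 1, p ≥ 1, and let w_{1j}, b_{1j} ∈ ℝ with w_{1j} ≠ 0 for j = 1, …, n, and w_{2kj}, b_{2k} ∈ ℝ for k = 1, …, p. Define c_{1k} = Σ_{j : w_{1j} < 0} w_{2kj} w_{1j}, c_{0k} = Σ_{j : w_{1j} < 0} w_{2kj} b_{1j} + b_{2k}, s_{kj} = w_{2kj} |w_{1j}|, and x_j = −b_{1j} / w_{1j}. Then for every x ∈ ℝ and every k = 1, …, p: Σ_{j=1}^{n} w_{2kj} σ(w_{1j} x + b_{1j}) + b_{2k} = Σ_{j=1}^{n} s_{kj} σ(x − x_j) + c_{1k} x + c_{0k}. -/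

import Mathlib

/-- The rectified linear unit `σ(x) = max(0, x)`. -/
noncomputable def relu (x : ℝ) : ℝ := max 0 x

lemma relu_key (w b c x : ℝ) (hw : w ≠ 0) :
    c * relu (w * x + b) =
      (c * |w|) * relu (x - (-b / w)) + (if w < 0 then c * (w * x + b) else 0) := by
  have ht : w * x + b = w * (x - (-b / w)) := by field_simp; ring
  set t := x - (-b / w) with htdef
  rw [ht]
  unfold relu
  rcases lt_or_gt_of_ne hw with hw' | hw'
  · rw [if_pos hw', abs_of_neg hw']
    rcases le_or_gt t 0 with h | h
    · rw [max_eq_right (by nlinarith), max_eq_left h]; ring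
    · rw [max_eq_left (by nlinarith), max_eq_right h.le]; ring
  · rw [if_neg (by linarith), abs_of_pos hw']
    rcases le_or_gt t 0 with h | h
    · rw [max_eq_left (by nlinarith), max_eq_left h]; ring
    · rw [max_eq_right (by nlinarith), max_eq_right h.le]; ring

open Finset in
/-- **Forward-facing ReLU representation (Lemma 1).** A single-hidden-layer `ℝ → ℝ^p`
ReLU network with nonzero input weights equals a sum of forward-facing rectified linear
units `σ(x - x_j)` plus an affine term, with
`c_{1k} = ∑_{j : w_{1j} < 0} w_{2kj} w_{1j}`,
`c_{0k} = ∑_{j : w_{1j} < 0} w_{2kj} b_{1j} + b_{2k}`,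
`s_{kj} = w_{2kj} |w_{1j}|` and `x_j = -b_{1j} / w_{1j}`. -/
theorem forward_facing_relu (n p : ℕ) (hn : 1 ≤ n) (hp : 1 ≤ p)
    (w1 b1 : Fin n → ℝ) (hw1 : ∀ j, w1 j ≠ 0)
    (w2 : Fin p → Fin n → ℝ) (b2 : Fin p → ℝ)
    (x : ℝ) (k : Fin p) :
    (∑ j, w2 k j * relu (w1 j * x + b1 j)) + b2 k =
      (∑ j, (w2 k j * |w1 j|) * relu (x - (-(b1 j) / w1 j)))
        + (∑ j ∈ univ.filter (fun j => w1 j < 0), w2 k j * w1 j) * x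
        + ((∑ j ∈ univ.filter (fun j => w1 j < 0), w2 k j * b1 j) + b2 k) := by
  have h1 : (∑ j, w2 k j * relu (w1 j * x + b1 j)) =
      ∑ j, ((w2 k j * |w1 j|) * relu (x - (-(b1 j) / w1 j))
        + (if w1 j < 0 then w2 k j * (w1 j * x + b1 j) else 0)) := by
    refine Finset.sum_congr rfl fun j _ => ?_
    exact relu_key (w1 j) (b1 j) (w2 k j) x (hw1 j)
  rw [h1, Finset.sum_add_distrib, Finset.sum_ite, Finset.sum_const_zero, add_zero]
  have : ∑ j ∈ univ.filter (fun j => w1 j < 0), w2 k j * (w1 j * x + b1 j)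
      = (∑ j ∈ univ.filter (fun j => w1 j < 0), w2 k j * w1 j * x)
        + ∑ j ∈ univ.filter (fun j => w1 j < 0), w2 k j * b1 j := by
    rw [← Finset.sum_add_distrib]; exact Finset.sum_congr rfl fun j _ => by ring
  rw [this, Finset.sum_mul]
  ring
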